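/- Let $\alpha > 0$, $Q > 0$, $M \in \mathbb{R}$, and define $f : (0,\infty) \to \mathbb{R}$ by $f(r) = 1 - 2\alpha^2 Q + \frac{4 \alpha Q^{3/2}}{3 r} - \frac{2M}{r} + 4 r \alpha^3 \sqrt{Q} - 4 \alpha^4 r^2 \log\left(1 + \frac{\sqrt{Q}}{r \alpha}\right)$. If $R_0 > 0$ satisfies $f(R_0) = 0$ and $f'(R_0) = 0$, then $\frac{1}{2} f''(R_0) = \frac{2 \alpha^2 Q^2 - (R_0 \alpha + \sqrt{Q})^2}{R_0^2 (R_0 \alpha + \sqrt{Q})^2}$. Moreover, if in addition $f''(R_0) > 0$, then $Q > \frac{1}{2 \alpha^2}$. -/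

import Mathlib

/-- Extremal RegMax black holes: at a double root `R₀` of the RegMax metric
function, `½ f''(R₀) = (2α²Q² - (R₀α+√Q)²)/(R₀²(R₀α+√Q)²)`; positivity of
`f''(R₀)` forces the charge gap `Q > 1/(2α²)`. -/
theorem regMax_extremal_horizon
    (α Q M R0 : ℝ) (hα : 0 < α) (hQ : 0 < Q) (hR0 : 0 < R0) (f : ℝ → ℝ)
    (hf : f = fun r => 1 - 2 * α ^ 2 * Q + 4 * α * (Q * Real.sqrt Q) / (3 * r)
      - 2 * M / r + 4 * r * α ^ 3 * Real.sqrt Q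
      - 4 * α ^ 4 * r ^ 2 * Real.log (1 + Real.sqrt Q / (r * α)))
    (hroot : f R0 = 0) (hroot' : deriv f R0 = 0) :
    (1 / 2) * deriv (deriv f) R0
      = (2 * α ^ 2 * Q ^ 2 - (R0 * α + Real.sqrt Q) ^ 2)
        / (R0 ^ 2 * (R0 * α + Real.sqrt Q) ^ 2) ∧
    (0 < deriv (deriv f) R0 → Q > 1 / (2 * α ^ 2)) := by
  have hα' : α ≠ 0 := ne_of_gt hα
  set s := Real.sqrt Q with hs
  have hs0 : 0 < s := Real.sqrt_pos.mpr hQ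
  have hsq : s ^ 2 = Q := Real.sq_sqrt hQ.le
  set g : ℝ → ℝ := fun x => -(4*α*(Q*s))/(3*x^2) + 2*M/x^2 + 4*α^3*s
      - 8*α^4*x*Real.log (1 + s/(x*α)) + 4*α^4*x*s/(x*α+s) with hg
  set h2 : ℝ → ℝ := fun x => 8*α*(Q*s)/(3*x^3) - 4*M/x^3
      - 8*α^4*Real.log (1 + s/(x*α))
      + 8*α^4*s/(x*α+s) + 4*α^4*s^2/(x*α+s)^2 with hh2
  -- first derivative
  have hfeq : f = fun x => 1 - 2*α^2*Q + (4*α*(Q*s)/3) * x⁻¹ - (2*M) * x⁻¹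
      + 4*x*α^3*s - 4*α^4*x^2*Real.log (1 + s/(x*α)) := by
    rw [hf]; funext x; ring
  have key : ∀ r ∈ Set.Ioi (0:ℝ), HasDerivAt f (g r) r := by
    intro r hr
    have hr0 : 0 < r := hr
    have hrne : r ≠ 0 := ne_of_gt hr0
    have hu : (0:ℝ) < 1 + s/(r*α) := by positivity
    have hA : (0:ℝ) < r*α + s := by positivity
    have hinner : HasDerivAt (fun x : ℝ => 1 + s/(x*α)) ((s/α) * (-(r^2)⁻¹)) r := by
      have h1 : (fun x : ℝ => 1 + s/(x*α)) = fun x => 1 + (s/α) * x⁻¹ := by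
        funext x; ring
      rw [h1]
      exact ((hasDerivAt_inv hrne).const_mul (s/α)).const_add 1
    have hlog : HasDerivAt (fun x : ℝ => Real.log (1 + s/(x*α)))
        ((s/α) * (-(r^2)⁻¹) / (1 + s/(r*α))) r := hinner.log (ne_of_gt hu)
    have hT5 : HasDerivAt (fun x : ℝ => 4*α^4*x^2*Real.log (1 + s/(x*α)))
        (4*α^4*(↑2*r^1) * Real.log (1 + s/(r*α))
          + 4*α^4*r^2 * ((s/α) * (-(r^2)⁻¹) / (1 + s/(r*α)))) r :=
      ((hasDerivAt_pow 2 r).const_mul (4*α^4)).mul hlog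
    have hT4 : HasDerivAt (fun x : ℝ => 4*x*α^3*s) (4*1*α^3*s) r :=
      (((hasDerivAt_id r).const_mul 4).mul_const (α^3)).mul_const s
    have hd := (((((hasDerivAt_const r (1 - 2*α^2*Q)).add
        ((hasDerivAt_inv hrne).const_mul (4*α*(Q*s)/3))).sub
        ((hasDerivAt_inv hrne).const_mul (2*M))).add hT4).sub hT5)
    rw [hfeq]
    convert hd using 1
    · rfl
    · rfl
    · rfl
    rw [hg]
    field_simp
    ring
  -- second derivative
  have hgeq : g = fun x => -((4*α*(Q*s)/3) * (x^2)⁻¹) + (2*M)*(x^2)⁻¹ + 4*α^3*s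
      - 8*α^4*x*Real.log (1 + s/(x*α)) + 4*α^4*x*s/(x*α+s) := by
    rw [hg]; funext x; ring
  have key2 : ∀ r ∈ Set.Ioi (0:ℝ), HasDerivAt g (h2 r) r := by
    intro r hr
    have hr0 : 0 < r := hr
    have hrne : r ≠ 0 := ne_of_gt hr0
    have hu : (0:ℝ) < 1 + s/(r*α) := by positivity
    have hA : (0:ℝ) < r*α + s := by positivity
    have hinner : HasDerivAt (fun x : ℝ => 1 + s/(x*α)) ((s/α) * (-(r^2)⁻¹)) r := by
      have h1 : (fun x : ℝ => 1 + s/(x*α)) = fun x => 1 + (s/α) * x⁻¹ := by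
        funext x; ring
      rw [h1]
      exact ((hasDerivAt_inv hrne).const_mul (s/α)).const_add 1
    have hlog : HasDerivAt (fun x : ℝ => Real.log (1 + s/(x*α)))
        ((s/α) * (-(r^2)⁻¹) / (1 + s/(r*α))) r := hinner.log (ne_of_gt hu)
    have hp2 : HasDerivAt (fun x : ℝ => (x^2)⁻¹) (-(↑2*r^1) / (r^2)^2) r :=
      (hasDerivAt_pow 2 r).inv (pow_ne_zero 2 hrne)
    have hT4 : HasDerivAt (fun x : ℝ => 8*α^4*x*Real.log (1 + s/(x*α)))
        (8*α^4*1 * Real.log (1 + s/(r*α))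
          + 8*α^4*r * ((s/α) * (-(r^2)⁻¹) / (1 + s/(r*α)))) r :=
      (((hasDerivAt_id r).const_mul (8*α^4)).mul hlog)
    have hT5 : HasDerivAt (fun x : ℝ => 4*α^4*x*s/(x*α+s))
        ((4*α^4*1*s * (r*α+s) - 4*α^4*r*s * (1*α)) / (r*α+s)^2) r :=
      ((((hasDerivAt_id r).const_mul (4*α^4)).mul_const s).div
        (((hasDerivAt_id r).mul_const α).add_const s) (ne_of_gt hA))
    have hd := (((((hp2.const_mul (4*α*(Q*s)/3)).neg).add
        (hp2.const_mul (2*M))).add (hasDerivAt_const r (4*α^3*s))).sub hT4).add hT5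
    rw [hgeq]
    convert hd using 1
    · rfl
    · rfl
    · rfl
    rw [hh2]
    field_simp
    ring
  -- assemble
  have hmem : Set.Ioi (0:ℝ) ∈ nhds R0 := isOpen_Ioi.mem_nhds hR0
  have hev : deriv f =ᶠ[nhds R0] g :=
    Filter.eventuallyEq_of_mem hmem fun r hr => (key r hr).deriv
  have hD2 : deriv (deriv f) R0 = h2 R0 := by
    rw [hev.deriv_eq]
    exact (key2 R0 hR0).deriv
  rw [hf] at hroot
  simp only at hroot
  have hrne : R0 ≠ 0 := ne_of_gt hR0
  have hApos : (0:ℝ) < R0*α + s := by positivity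
  set L := Real.log (1 + s/(R0*α)) with hLdef
  have hL' : Real.log (1 + s/(R0*α)) = L := rfl
  have part1 : (1 / 2) * deriv (deriv f) R0
      = (2 * α ^ 2 * Q ^ 2 - (R0 * α + s) ^ 2)
        / (R0 ^ 2 * (R0 * α + s) ^ 2) := by
    rw [hD2, hh2]
    simp only
    rw [hL']
    have hM : M = (3*R0^2 - 6*α^2*Q*R0^2 + 4*α*Q*s*R0 + 12*R0^3*α^3*s
        - 12*α^4*R0^4*L)/(6*R0) := by
      field_simp at hroot ⊢
      linear_combination -hroot
    rw [hM, ← hsq]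
    field_simp
    ring
  refine ⟨part1, fun hpos => ?_⟩
  have hden : (0:ℝ) < R0 ^ 2 * (R0 * α + s) ^ 2 := by positivity
  have h1 : 0 < (2 * α ^ 2 * Q ^ 2 - (R0 * α + s) ^ 2)
      / (R0 ^ 2 * (R0 * α + s) ^ 2) := by
    rw [← part1]; linarith
  have h2' : 0 < 2 * α ^ 2 * Q ^ 2 - (R0 * α + s) ^ 2 := by
    have := mul_pos h1 hden
    rwa [div_mul_cancel₀ _ (ne_of_gt hden)] at this
  have h3 : Q < (R0 * α + s) ^ 2 := by
    nlinarith [mul_pos (mul_pos hR0 hα) hs0]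
  rw [gt_iff_lt, div_lt_iff₀ (by positivity : (0:ℝ) < 2 * α ^ 2)]
  nlinarith
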